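/- Consider the dual problem: maximize ⟨λ,x⟩ − ε‖λ‖ over λ ∈ H subject to ‖λ‖'_φ ≤ 1. Then: (a) irrespective of δ, if ‖x‖ ≤ ε, then λ* = 0 is an optimal solution; (b) if ‖x‖ > ε, the dual problem admits an optimal solution if and only if Λ_δ(φ,x,ε) ≠ ∅, and λ* is an optimal solution if and only if λ* ∈ Λ_δ(φ,x,ε); (c) if ‖x‖ > ε, x is (φ,ε,δ)-feasible, and Λ_δ(φ,x,ε) = ∅, then the dual problem admits no optimal solution even though its supremum value is finite. -/

import Mathlib

open scoped ENNReal RealInnerProductSpace Pointwise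
open Metric Set

noncomputable section

variable {H : Type*} [NormedAddCommGroup H] [InnerProductSpace ℝ H]

/-- Feasible pairs `(𝔠, f)` of the linear inverse problem `LIP(φ, x, ε, δ)`:
`(c f)^(1/p) ≤ 𝔠` and `‖x - φ f‖ ≤ ε + δ 𝔠`. -/
def lipFeas (K : ℕ) (p : ℝ) (c : (Fin K → ℝ) → ℝ)
    (φ : (Fin K → ℝ) →ₗ[ℝ] H) (x : H) (ε δ : ℝ) : Set (ℝ × (Fin K → ℝ)) :=
  {cf | c cf.2 ^ (1 / p) ≤ cf.1 ∧ ‖x - φ cf.2‖ ≤ ε + δ * cf.1}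

/-- The optimal value `β(φ,x,ε,δ) ∈ [0,∞]` of `LIP(φ,x,ε,δ)`, i.e. the infimum of `𝔠^p`
over feasible pairs `(𝔠,f)`; it equals `∞` if the problem is infeasible. -/
def lipVal (K : ℕ) (p : ℝ) (c : (Fin K → ℝ) → ℝ)
    (φ : (Fin K → ℝ) →ₗ[ℝ] H) (x : H) (ε δ : ℝ) : ℝ≥0∞ :=
  sInf ((fun cf : ℝ × (Fin K → ℝ) => ENNReal.ofReal (cf.1 ^ p)) '' lipFeas K p c φ x ε δ)

/-- `E(φ,x,ε,δ)`: the set of `f`-components of optimal solutions of `LIP(φ,x,ε,δ)`. -/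
def lipEnc (K : ℕ) (p : ℝ) (c : (Fin K → ℝ) → ℝ)
    (φ : (Fin K → ℝ) →ₗ[ℝ] H) (x : H) (ε δ : ℝ) : Set (Fin K → ℝ) :=
  {f | ∃ 𝔠 : ℝ, (𝔠, f) ∈ lipFeas K p c φ x ε δ ∧
      ENNReal.ofReal (𝔠 ^ p) = lipVal K p c φ x ε δ}

/-- The set `S_δ(φ,1) = {z : ∃ f, c f ≤ 1 ∧ ‖z - φ f‖ ≤ δ}`. -/
def lipSet (K : ℕ) (c : (Fin K → ℝ) → ℝ)
    (φ : (Fin K → ℝ) →ₗ[ℝ] H) (δ : ℝ) : Set H :=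
  {z | ∃ f, c f ≤ 1 ∧ ‖z - φ f‖ ≤ δ}

/-- The dual function `‖λ‖'_φ = sup {⟨λ,z⟩ : z ∈ S_δ(φ,1)}`. -/
def lipDual (K : ℕ) (c : (Fin K → ℝ) → ℝ)
    (φ : (Fin K → ℝ) →ₗ[ℝ] H) (δ : ℝ) (l : H) : ℝ :=
  sSup ((fun z => ⟪l, z⟫) '' lipSet K c φ δ)

/-- The set `Λ_δ(φ,x,ε)` of optimal dual variables: `λ` with `‖λ‖'_φ = 1` and
`⟨λ,x⟩ - ε‖λ‖ = (β(φ,x,ε,δ))^(1/p)`. -/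
def lipLambda (K : ℕ) (p : ℝ) (c : (Fin K → ℝ) → ℝ)
    (φ : (Fin K → ℝ) →ₗ[ℝ] H) (x : H) (ε δ : ℝ) : Set H :=
  {l | lipDual K c φ δ l = 1 ∧
      ENNReal.ofReal (⟪l, x⟫ - ε * ‖l‖) = lipVal K p c φ x ε δ ^ (1 / p)}

/-- `λ` is an optimal solution of the dual problem
`sup { ⟨λ,x⟩ − ε‖λ‖ : λ ∈ H, ‖λ‖'_φ ≤ 1 }`. -/
def lipDualOpt (K : ℕ) (c : (Fin K → ℝ) → ℝ)
    (φ : (Fin K → ℝ) →ₗ[ℝ] H) (x : H) (ε δ : ℝ) (l : H) : Prop :=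
  lipDual K c φ δ l ≤ 1 ∧
    ∀ l' : H, lipDual K c φ δ l' ≤ 1 → ⟪l', x⟫ - ε * ‖l'‖ ≤ ⟪l, x⟫ - ε * ‖l‖

section LipHelpers


variable {K : ℕ} {p : ℝ} {c : (Fin K → ℝ) → ℝ} {φ : (Fin K → ℝ) →ₗ[ℝ] H} {x : H} {ε δ : ℝ}
lemma lip_c_zero (hp : 0 < p)
    (hhom : ∀ (α : ℝ) (f : Fin K → ℝ), 0 ≤ α → c (α • f) = α ^ p * c f) :
    c 0 = 0 := by
  have h := hhom 0 0 le_rfl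
  simpa [Real.zero_rpow hp.ne'] using h

lemma lip_zero_mem (hp : 0 < p)
    (hhom : ∀ (α : ℝ) (f : Fin K → ℝ), 0 ≤ α → c (α • f) = α ^ p * c f)
    (hδ : 0 ≤ δ) : (0 : H) ∈ lipSet K c φ δ :=
  ⟨0, by rw [lip_c_zero hp hhom]; norm_num, by simpa using hδ⟩

lemma lipSet_eq_image :
    lipSet K c φ δ =
      (fun q : (Fin K → ℝ) × H => φ q.1 + q.2) '' ({f | c f ≤ 1} ×ˢ closedBall 0 δ) := by
  ext z
  constructor
  · rintro ⟨f, hf, hz⟩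
    exact ⟨(f, z - φ f), ⟨hf, by simpa [mem_closedBall, dist_eq_norm] using hz⟩, by simp⟩
  · rintro ⟨⟨f, w⟩, ⟨hf, hw⟩, rfl⟩
    exact ⟨f, hf, by simpa [mem_closedBall, dist_eq_norm] using hw⟩

lemma lipSet_compact [FiniteDimensional ℝ H] (hcpt : IsCompact {f | c f ≤ 1}) :
    IsCompact (lipSet K c φ δ) := by
  rw [lipSet_eq_image]
  exact (hcpt.prod (isCompact_closedBall 0 δ)).image
    ((φ.continuous_of_finiteDimensional.comp continuous_fst).add continuous_snd)

lemma lipSet_convex (hconv : Convex ℝ {f | c f ≤ 1}) : Convex ℝ (lipSet K c φ δ) := by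
  rw [lipSet_eq_image]
  have h := (hconv.prod (convex_closedBall (0 : H) δ)).linear_image
    (φ.coprod (LinearMap.id : H →ₗ[ℝ] H))
  convert h using 2
  simp

lemma lip_inner_le_lipDual [FiniteDimensional ℝ H] (hcpt : IsCompact {f | c f ≤ 1})
    (l : H) {z : H} (hz : z ∈ lipSet K c φ δ) :
    ⟪l, z⟫ ≤ lipDual K c φ δ l :=
  le_csSup ((lipSet_compact hcpt).image
      (Continuous.inner continuous_const continuous_id)).bddAbove
    (mem_image_of_mem _ hz)

lemma lip_lipDual_le (hp : 0 < p)
    (hhom : ∀ (α : ℝ) (f : Fin K → ℝ), 0 ≤ α → c (α • f) = α ^ p * c f)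
    (hδ : 0 ≤ δ) {l : H} {M : ℝ}
    (hM : ∀ z ∈ lipSet K c φ δ, ⟪l, z⟫ ≤ M) :
    lipDual K c φ δ l ≤ M :=
  csSup_le (Nonempty.image _ ⟨0, lip_zero_mem hp hhom hδ⟩)
    (by rintro _ ⟨z, hz, rfl⟩; exact hM z hz)

lemma lip_lipDual_nonneg [FiniteDimensional ℝ H] (hp : 0 < p)
    (hhom : ∀ (α : ℝ) (f : Fin K → ℝ), 0 ≤ α → c (α • f) = α ^ p * c f)
    (hδ : 0 ≤ δ) (hcpt : IsCompact {f | c f ≤ 1}) (l : H) :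
    0 ≤ lipDual K c φ δ l := by
  have h := lip_inner_le_lipDual (φ := φ) hcpt l (lip_zero_mem hp hhom hδ)
  simpa using h

lemma lip_lipDual_smul [FiniteDimensional ℝ H] (hp : 0 < p)
    (hhom : ∀ (α : ℝ) (f : Fin K → ℝ), 0 ≤ α → c (α • f) = α ^ p * c f)
    (hδ : 0 ≤ δ) (hcpt : IsCompact {f | c f ≤ 1}) {t : ℝ} (ht : 0 < t) (l : H) :
    lipDual K c φ δ (t • l) = t * lipDual K c φ δ l := by
  apply le_antisymm
  · apply lip_lipDual_le hp hhom hδ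
    intro z hz
    rw [real_inner_smul_left]
    exact mul_le_mul_of_nonneg_left (lip_inner_le_lipDual hcpt l hz) ht.le
  · rw [← le_div_iff₀' ht]
    apply lip_lipDual_le hp hhom hδ
    intro z hz
    rw [le_div_iff₀' ht]
    have h := lip_inner_le_lipDual hcpt (t • l) hz
    rwa [real_inner_smul_left] at h


lemma lip_weak_real [FiniteDimensional ℝ H] (hp : 0 < p) (hc0 : ∀ f, 0 ≤ c f)
    (hhom : ∀ (α : ℝ) (f : Fin K → ℝ), 0 ≤ α → c (α • f) = α ^ p * c f)
    (hcpt : IsCompact {f | c f ≤ 1}) (hδ : 0 ≤ δ)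
    {l : H} (hl : lipDual K c φ δ l ≤ 1) {𝔠 : ℝ} {f : Fin K → ℝ}
    (hfeas : (𝔠, f) ∈ lipFeas K p c φ x ε δ) :
    ⟪l, x⟫ - ε * ‖l‖ ≤ 𝔠 := by
  obtain ⟨h1, h2⟩ := hfeas
  simp only at h1 h2
  have h𝔠0 : 0 ≤ 𝔠 := le_trans (Real.rpow_nonneg (hc0 f) _) h1
  rcases eq_or_ne l 0 with rfl | hl0
  · simpa using h𝔠0
  have hlnorm : 0 < ‖l‖ := norm_pos_iff.2 hl0
  have key : ∀ z ∈ lipSet K c φ δ, ⟪l, z⟫ ≤ 1 := fun z hz =>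
    (lip_inner_le_lipDual hcpt l hz).trans hl
  rcases eq_or_lt_of_le h𝔠0 with heq | h𝔠pos
  · -- 𝔠 = 0
    subst heq
    have hcf : c f = 0 := by
      have hz : c f ^ (1 / p) = 0 :=
        le_antisymm (by simpa using h1) (Real.rpow_nonneg (hc0 f) _)
      exact (Real.rpow_eq_zero (hc0 f) (by positivity)).1 hz
    have hphi : ⟪l, φ f⟫ ≤ 0 := by
      by_contra hd
      push_neg at hd
      have hzS : φ ((2 / ⟪l, φ f⟫) • f) ∈ lipSet K c φ δ :=
        ⟨(2 / ⟪l, φ f⟫) • f, by rw [hhom _ f (by positivity)]; simp [hcf], by simpa using hδ⟩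
      have hk := key _ hzS
      rw [map_smul, real_inner_smul_right, div_mul_cancel₀ _ hd.ne'] at hk
      linarith
    have hA := real_inner_le_norm l (x - φ f)
    rw [inner_sub_right] at hA
    have h4 : ‖x - φ f‖ ≤ ε := by simpa using h2
    nlinarith [mul_le_mul_of_nonneg_left h4 (norm_nonneg l)]
  · -- 0 < 𝔠
    have hcf : c f ≤ 𝔠 ^ p := by
      have h := Real.rpow_le_rpow (Real.rpow_nonneg (hc0 f) _) h1 hp.le
      rwa [one_div, Real.rpow_inv_rpow (hc0 f) hp.ne'] at h
    have hzS : φ (𝔠⁻¹ • f) + δ • (‖l‖⁻¹ • l) ∈ lipSet K c φ δ := by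
      refine ⟨𝔠⁻¹ • f, ?_, ?_⟩
      · rw [hhom _ _ (by positivity)]
        calc 𝔠⁻¹ ^ p * c f ≤ 𝔠⁻¹ ^ p * 𝔠 ^ p :=
              mul_le_mul_of_nonneg_left hcf (Real.rpow_nonneg (by positivity) _)
          _ = 1 := by
              rw [← Real.mul_rpow (by positivity) h𝔠0, inv_mul_cancel₀ h𝔠pos.ne',
                Real.one_rpow]
      · have hn : ‖δ • (‖l‖⁻¹ • l)‖ = δ := by
          rw [norm_smul, norm_smul, norm_inv, norm_norm, inv_mul_cancel₀ hlnorm.ne',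
            Real.norm_eq_abs, abs_of_nonneg hδ, mul_one]
        simpa [hn] using le_refl δ
    have hk := key _ hzS
    rw [inner_add_right, map_smul, real_inner_smul_right, real_inner_smul_right,
      real_inner_smul_right, real_inner_self_eq_norm_mul_norm,
      show ‖l‖⁻¹ * (‖l‖ * ‖l‖) = ‖l‖ by field_simp] at hk
    -- hk : 𝔠⁻¹ * ⟪l, φ f⟫ + δ * ‖l‖ ≤ 1
    have h5 : ⟪l, φ f⟫ + 𝔠 * (δ * ‖l‖) ≤ 𝔠 := by
      have h6 := mul_le_mul_of_nonneg_left hk h𝔠0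
      rw [mul_add, ← mul_assoc, mul_inv_cancel₀ h𝔠pos.ne', one_mul, mul_one] at h6
      exact h6
    have hA := real_inner_le_norm l (x - φ f)
    rw [inner_sub_right] at hA
    nlinarith [mul_le_mul_of_nonneg_left h2 (norm_nonneg l)]

lemma lip_weak [FiniteDimensional ℝ H] (hp : 0 < p) (hc0 : ∀ f, 0 ≤ c f)
    (hhom : ∀ (α : ℝ) (f : Fin K → ℝ), 0 ≤ α → c (α • f) = α ^ p * c f)
    (hcpt : IsCompact {f | c f ≤ 1}) (hδ : 0 ≤ δ)
    {l : H} (hl : lipDual K c φ δ l ≤ 1) :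
    ENNReal.ofReal (⟪l, x⟫ - ε * ‖l‖) ≤ lipVal K p c φ x ε δ ^ (1 / p) := by
  have key : ENNReal.ofReal (⟪l, x⟫ - ε * ‖l‖) ^ p ≤ lipVal K p c φ x ε δ := by
    apply le_sInf
    rintro b ⟨⟨𝔠, f⟩, hfeas, rfl⟩
    have h𝔠0 : 0 ≤ 𝔠 := le_trans (Real.rpow_nonneg (hc0 f) _) hfeas.1
    have hle := lip_weak_real hp hc0 hhom hcpt hδ hl hfeas
    calc ENNReal.ofReal (⟪l, x⟫ - ε * ‖l‖) ^ p ≤ ENNReal.ofReal 𝔠 ^ p :=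
          ENNReal.rpow_le_rpow (ENNReal.ofReal_le_ofReal hle) hp.le
      _ = ENNReal.ofReal (𝔠 ^ p) := ENNReal.ofReal_rpow_of_nonneg h𝔠0 hp.le
  calc ENNReal.ofReal (⟪l, x⟫ - ε * ‖l‖)
      = (ENNReal.ofReal (⟪l, x⟫ - ε * ‖l‖) ^ p) ^ (1 / p) := by
        rw [← ENNReal.rpow_mul, mul_one_div_cancel hp.ne', ENNReal.rpow_one]
    _ ≤ _ := ENNReal.rpow_le_rpow key (by positivity)

lemma lip_reverse [FiniteDimensional ℝ H] (hp : 0 < p) (hc0 : ∀ f, 0 ≤ c f)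
    (hhom : ∀ (α : ℝ) (f : Fin K → ℝ), 0 ≤ α → c (α • f) = α ^ p * c f)
    (hconv : Convex ℝ {f | c f ≤ 1}) (hcpt : IsCompact {f | c f ≤ 1})
    (hε : 0 ≤ ε) (hδ : 0 ≤ δ) {M : ℝ} (hM0 : 0 ≤ M)
    (hM : ∀ l : H, lipDual K c φ δ l ≤ 1 → ⟪l, x⟫ - ε * ‖l‖ ≤ M) :
    lipVal K p c φ x ε δ ^ (1 / p) ≤ ENNReal.ofReal M := by
  have claim1 : ∀ l : H, ⟪l, x⟫ ≤ M * lipDual K c φ δ l + ε * ‖l‖ := by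
    intro l
    have hd0 : 0 ≤ lipDual K c φ δ l := lip_lipDual_nonneg hp hhom hδ hcpt l
    rcases eq_or_lt_of_le hd0 with hd | hd
    · have hle : ⟪l, x⟫ - ε * ‖l‖ ≤ 0 := by
        by_contra hgt
        push_neg at hgt
        have ht : (0 : ℝ) < (M + 1) / (⟪l, x⟫ - ε * ‖l‖) := by positivity
        have hfe : lipDual K c φ δ (((M + 1) / (⟪l, x⟫ - ε * ‖l‖)) • l) ≤ 1 := by
          rw [lip_lipDual_smul hp hhom hδ hcpt ht l, ← hd, mul_zero]; norm_num
        have h9 := hM _ hfe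
        rw [real_inner_smul_left, norm_smul, Real.norm_eq_abs, abs_of_pos ht] at h9
        have hkey : ((M + 1) / (⟪l, x⟫ - ε * ‖l‖)) * ⟪l, x⟫ -
            ε * (((M + 1) / (⟪l, x⟫ - ε * ‖l‖)) * ‖l‖) = M + 1 := by
          field_simp
        linarith
      nlinarith [mul_nonneg hM0 hd0]
    · have hfe : lipDual K c φ δ ((lipDual K c φ δ l)⁻¹ • l) ≤ 1 := by
        rw [lip_lipDual_smul hp hhom hδ hcpt (inv_pos.2 hd) l, inv_mul_cancel₀ hd.ne']
      have h9 := hM _ hfe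
      rw [real_inner_smul_left, norm_smul, Real.norm_eq_abs,
        abs_of_pos (inv_pos.2 hd)] at h9
      have h10 := mul_le_mul_of_nonneg_left h9 hd.le
      have h11 : lipDual K c φ δ l *
          ((lipDual K c φ δ l)⁻¹ * ⟪l, x⟫ - ε * ((lipDual K c φ δ l)⁻¹ * ‖l‖)) =
          ⟪l, x⟫ - ε * ‖l‖ := by
        field_simp
      rw [h11] at h10
      linarith [mul_comm (lipDual K c φ δ l) M]
  have hSne : (lipSet K c φ δ).Nonempty := ⟨0, lip_zero_mem hp hhom hδ⟩
  have hScpt : IsCompact (lipSet K c φ δ) := lipSet_compact (φ := φ) hcpt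
  have hSconv : Convex ℝ (lipSet K c φ δ) := lipSet_convex (φ := φ) hconv
  have claim2 : x ∈ M • lipSet K c φ δ + closedBall (0 : H) ε := by
    by_contra hx
    have hCconv : Convex ℝ (M • lipSet K c φ δ + closedBall (0 : H) ε) :=
      (hSconv.smul M).add (convex_closedBall 0 ε)
    have hCcl : IsClosed (M • lipSet K c φ δ + closedBall (0 : H) ε) := by
      have hMc : IsCompact (M • lipSet K c φ δ) := by
        rw [← Set.image_smul]; exact hScpt.image (continuous_const_smul M)
      exact (hMc.add (isCompact_closedBall 0 ε)).isClosed
    obtain ⟨g, u, hgb, hux⟩ := geometric_hahn_banach_closed_point hCconv hCcl hx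
    set l : H := (InnerProductSpace.toDual ℝ H).symm g with hldef
    have hlg : ∀ y : H, ⟪l, y⟫ = g y := fun y => InnerProductSpace.toDual_symm_apply
    obtain ⟨z₀, hz₀S, hz₀max⟩ := hScpt.exists_isMaxOn hSne
      ((Continuous.inner continuous_const continuous_id).continuousOn :
        ContinuousOn (fun z : H => ⟪l, z⟫) _)
    have hdle : lipDual K c φ δ l ≤ ⟪l, z₀⟫ :=
      lip_lipDual_le hp hhom hδ (fun z hz => isMaxOn_iff.1 hz₀max z hz)
    by_cases h0 : l = 0
    · have hb := hgb _ (add_mem_add (smul_mem_smul_set hz₀S)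
        (mem_closedBall_self hε : (0 : H) ∈ closedBall (0 : H) ε))
      have h1 : g x = 0 := by rw [← hlg, h0, inner_zero_left]
      have h2 : g (M • z₀ + 0) = 0 := by rw [← hlg, h0, inner_zero_left]
      rw [h2] at hb; rw [h1] at hux; linarith
    · have hln : (0 : ℝ) < ‖l‖ := norm_pos_iff.2 h0
      have hwball : (ε / ‖l‖) • l ∈ closedBall (0 : H) ε := by
        have hn : ‖(ε / ‖l‖) • l‖ = ε := by
          rw [norm_smul, Real.norm_eq_abs, abs_of_nonneg (by positivity),
            div_mul_cancel₀ _ hln.ne']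
        exact mem_closedBall_zero_iff.2 (le_of_eq hn)
      have hwin : ⟪l, (ε / ‖l‖) • l⟫ = ε * ‖l‖ := by
        rw [real_inner_smul_right, real_inner_self_eq_norm_mul_norm]
        field_simp
      have hb := hgb _ (add_mem_add (smul_mem_smul_set hz₀S) hwball)
      have h2 : g (M • z₀ + (ε / ‖l‖) • l) = M * ⟪l, z₀⟫ + ε * ‖l‖ := by
        rw [← hlg, inner_add_right, real_inner_smul_right, hwin]
      have h3 : ⟪l, x⟫ ≤ M * lipDual K c φ δ l + ε * ‖l‖ := claim1 l
      have h4 : M * lipDual K c φ δ l ≤ M * ⟪l, z₀⟫ := mul_le_mul_of_nonneg_left hdle hM0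
      rw [h2] at hb
      rw [← hlg] at hux
      linarith
  rcases Set.mem_add.1 claim2 with ⟨y, hy, w', hw', hsum⟩
  rcases Set.mem_smul_set.1 hy with ⟨z, hzS, rfl⟩
  obtain ⟨f, hf1, hf2⟩ := hzS
  have hfeas : (M, M • f) ∈ lipFeas K p c φ x ε δ := by
    refine ⟨?_, ?_⟩
    · show c (M • f) ^ (1 / p) ≤ M
      rw [hhom M f hM0]
      calc (M ^ p * c f) ^ (1 / p) ≤ (M ^ p * 1) ^ (1 / p) :=
            Real.rpow_le_rpow (mul_nonneg (Real.rpow_nonneg hM0 _) (hc0 f))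
              (mul_le_mul_of_nonneg_left hf1 (Real.rpow_nonneg hM0 _)) (by positivity)
        _ = M := by rw [mul_one, one_div, Real.rpow_rpow_inv hM0 hp.ne']
    · show ‖x - φ (M • f)‖ ≤ ε + δ * M
      have hxe : x - φ (M • f) = M • (z - φ f) + w' := by
        rw [map_smul, ← hsum, smul_sub]; abel
      rw [hxe]
      calc ‖M • (z - φ f) + w'‖ ≤ ‖M • (z - φ f)‖ + ‖w'‖ := norm_add_le _ _
        _ ≤ M * δ + ε := by
            rw [norm_smul, Real.norm_eq_abs, abs_of_nonneg hM0]
            exact add_le_add (mul_le_mul_of_nonneg_left hf2 hM0)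
              (mem_closedBall_zero_iff.1 hw')
        _ = ε + δ * M := by ring
  have hle : lipVal K p c φ x ε δ ≤ ENNReal.ofReal (M ^ p) :=
    sInf_le ⟨(M, M • f), hfeas, rfl⟩
  calc lipVal K p c φ x ε δ ^ (1 / p) ≤ ENNReal.ofReal (M ^ p) ^ (1 / p) :=
        ENNReal.rpow_le_rpow hle (by positivity)
    _ = ENNReal.ofReal M := by
        rw [← ENNReal.ofReal_rpow_of_nonneg hM0 hp.le, ← ENNReal.rpow_mul,
          mul_one_div_cancel hp.ne', ENNReal.rpow_one]

lemma lip_exists_pos [FiniteDimensional ℝ H] (hp : 0 < p)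
    (hhom : ∀ (α : ℝ) (f : Fin K → ℝ), 0 ≤ α → c (α • f) = α ^ p * c f)
    (hδ : 0 ≤ δ) (hcpt : IsCompact {f | c f ≤ 1}) (hε : 0 ≤ ε) (hx : ε < ‖x‖) :
    ∃ l : H, lipDual K c φ δ l ≤ 1 ∧ 0 < ⟪l, x⟫ - ε * ‖l‖ := by
  have hx0 : 0 < ‖x‖ := lt_of_le_of_lt hε hx
  have hD0 : 0 ≤ lipDual K c φ δ x := lip_lipDual_nonneg hp hhom hδ hcpt x
  have hmax : (0 : ℝ) < max (lipDual K c φ δ x) 1 := lt_of_lt_of_le one_pos (le_max_right _ _)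
  have ht : (0 : ℝ) < (max (lipDual K c φ δ x) 1)⁻¹ := inv_pos.2 hmax
  refine ⟨(max (lipDual K c φ δ x) 1)⁻¹ • x, ?_, ?_⟩
  · rw [lip_lipDual_smul hp hhom hδ hcpt ht x]
    calc (max (lipDual K c φ δ x) 1)⁻¹ * lipDual K c φ δ x
        ≤ (max (lipDual K c φ δ x) 1)⁻¹ * max (lipDual K c φ δ x) 1 :=
          mul_le_mul_of_nonneg_left (le_max_left _ _) ht.le
      _ = 1 := inv_mul_cancel₀ hmax.ne'
  · rw [real_inner_smul_left, norm_smul, Real.norm_eq_abs, abs_of_pos ht,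
      real_inner_self_eq_norm_mul_norm]
    nlinarith [mul_pos ht (mul_pos hx0 (sub_pos.2 hx))]

end LipHelpers

/-- (a) If `‖x‖ ≤ ε`, then `λ* = 0` is optimal for the dual problem.
(b) If `‖x‖ > ε`, the dual problem admits an optimal solution iff `Λ_δ(φ,x,ε) ≠ ∅`, and
`λ*` is optimal iff `λ* ∈ Λ_δ(φ,x,ε)`.  (c) If `‖x‖ > ε`, `x` is `(φ,ε,δ)`-feasible and
`Λ_δ(φ,x,ε) = ∅`, then no optimal solution exists although the supremum is finite. -/
theorem dual_problem_solutions
    [FiniteDimensional ℝ H]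
    (K : ℕ) (p : ℝ) (c : (Fin K → ℝ) → ℝ)
    (φ : (Fin K → ℝ) →ₗ[ℝ] H) (x : H) (ε δ : ℝ)
    (hp : 0 < p) (hc0 : ∀ f, 0 ≤ c f)
    (hhom : ∀ (α : ℝ) (f : Fin K → ℝ), 0 ≤ α → c (α • f) = α ^ p * c f)
    (hconv : Convex ℝ {f | c f ≤ 1}) (hcpt : IsCompact {f | c f ≤ 1})
    (hε : 0 ≤ ε) (hδ : 0 ≤ δ) :
    (‖x‖ ≤ ε → lipDualOpt K c φ x ε δ (0 : H)) ∧
    (ε < ‖x‖ →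
      ((∃ l : H, lipDualOpt K c φ x ε δ l) ↔ (lipLambda K p c φ x ε δ).Nonempty) ∧
      (∀ l : H, lipDualOpt K c φ x ε δ l ↔ l ∈ lipLambda K p c φ x ε δ)) ∧
    (ε < ‖x‖ → lipVal K p c φ x ε δ ≠ ⊤ → lipLambda K p c φ x ε δ = ∅ →
      (¬ ∃ l : H, lipDualOpt K c φ x ε δ l) ∧
      sSup ((fun l : H => ENNReal.ofReal (⟪l, x⟫ - ε * ‖l‖)) ''
          {l : H | lipDual K c φ δ l ≤ 1}) ≠ ⊤) := by
  have main : ε < ‖x‖ →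
      ∀ l : H, lipDualOpt K c φ x ε δ l ↔ l ∈ lipLambda K p c φ x ε δ := by
    intro hx l
    obtain ⟨l₀, hl₀f, hl₀pos⟩ := lip_exists_pos hp hhom hδ hcpt hε hx
    constructor
    · rintro ⟨hfeasl, hopt⟩
      have hapos : 0 < ⟪l, x⟫ - ε * ‖l‖ := lt_of_lt_of_le hl₀pos (hopt l₀ hl₀f)
      have hwk := lip_weak (x := x) (ε := ε) hp hc0 hhom hcpt hδ hfeasl
      have hrev := lip_reverse hp hc0 hhom hconv hcpt hε hδ hapos.le
        (fun l' hl' => hopt l' hl')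
      have heq : ENNReal.ofReal (⟪l, x⟫ - ε * ‖l‖) = lipVal K p c φ x ε δ ^ (1 / p) :=
        le_antisymm hwk hrev
      refine ⟨?_, heq⟩
      rcases lt_or_eq_of_le hfeasl with hlt | heq1
      · exfalso
        have hd0 : 0 ≤ lipDual K c φ δ l := lip_lipDual_nonneg hp hhom hδ hcpt l
        rcases eq_or_lt_of_le hd0 with h0 | h0
        · have hfe2 : lipDual K c φ δ ((2 : ℝ) • l) ≤ 1 := by
            rw [lip_lipDual_smul hp hhom hδ hcpt two_pos l, ← h0, mul_zero]; norm_num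
          have h2 := hopt _ hfe2
          rw [real_inner_smul_left, norm_smul, Real.norm_eq_abs,
            abs_of_pos (two_pos : (0:ℝ) < 2)] at h2
          linarith
        · have hs1 : 1 < (lipDual K c φ δ l)⁻¹ := (one_lt_inv₀ h0).2 hlt
          have hfe2 : lipDual K c φ δ ((lipDual K c φ δ l)⁻¹ • l) ≤ 1 := by
            rw [lip_lipDual_smul hp hhom hδ hcpt (inv_pos.2 h0) l,
              inv_mul_cancel₀ h0.ne']
          have h2 := hopt _ hfe2
          rw [real_inner_smul_left, norm_smul, Real.norm_eq_abs,
            abs_of_pos (inv_pos.2 h0)] at h2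
          nlinarith [mul_pos (by linarith : (0:ℝ) < (lipDual K c φ δ l)⁻¹ - 1) hapos]
      · exact heq1
    · rintro ⟨hd1, hval⟩
      have hwk₀ := lip_weak (x := x) (ε := ε) hp hc0 hhom hcpt hδ hl₀f
      have hapos : 0 < ⟪l, x⟫ - ε * ‖l‖ := by
        by_contra hle
        push_neg at hle
        have h0 : ENNReal.ofReal (⟪l, x⟫ - ε * ‖l‖) = 0 := ENNReal.ofReal_eq_zero.2 hle
        have h0' : lipVal K p c φ x ε δ ^ (1 / p) = 0 := hval.symm.trans h0
        have h1 : ENNReal.ofReal (⟪l₀, x⟫ - ε * ‖l₀‖) = 0 :=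
          le_antisymm (hwk₀.trans_eq h0') zero_le
        have := ENNReal.ofReal_eq_zero.1 h1
        linarith
      refine ⟨hd1.le, fun l' hl' => ?_⟩
      have hwk' := lip_weak (x := x) (ε := ε) hp hc0 hhom hcpt hδ hl'
      have h2 : ENNReal.ofReal (⟪l', x⟫ - ε * ‖l'‖) ≤
          ENNReal.ofReal (⟪l, x⟫ - ε * ‖l‖) := hwk'.trans hval.ge
      exact (ENNReal.ofReal_le_ofReal_iff hapos.le).1 h2
  refine ⟨?_, fun hx => ⟨?_, main hx⟩, fun hx hfin hlam => ⟨?_, ?_⟩⟩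
  · intro hxe
    constructor
    · apply lip_lipDual_le hp hhom hδ
      intro z hz
      simp
    · intro l' _
      have h1 : ⟪l', x⟫ ≤ ‖l'‖ * ‖x‖ := real_inner_le_norm _ _
      have h2 : ‖l'‖ * ‖x‖ ≤ ‖l'‖ * ε := mul_le_mul_of_nonneg_left hxe (norm_nonneg _)
      simp only [inner_zero_left, norm_zero, mul_zero, sub_zero]
      nlinarith [norm_nonneg l']
  · exact ⟨fun ⟨l, hl⟩ => ⟨l, (main hx l).1 hl⟩, fun ⟨l, hl⟩ => ⟨l, (main hx l).2 hl⟩⟩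
  · rintro ⟨l, hl⟩
    have h := (main hx l).1 hl
    rw [hlam] at h
    exact h
  · have hb : sSup ((fun l : H => ENNReal.ofReal (⟪l, x⟫ - ε * ‖l‖)) ''
        {l : H | lipDual K c φ δ l ≤ 1}) ≤ lipVal K p c φ x ε δ ^ (1 / p) := by
      apply sSup_le
      rintro b ⟨l, hl, rfl⟩
      exact lip_weak (x := x) (ε := ε) hp hc0 hhom hcpt hδ hl
    have hfin' : lipVal K p c φ x ε δ ^ (1 / p) ≠ ⊤ :=
      ENNReal.rpow_ne_top_of_nonneg (by positivity) hfin
    exact ne_top_of_le_ne_top hfin' hb
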